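/- In the DSG method, assuming the saddle-point assumption and G(z⁽ᵏ⁾) ≠ 0 for all k, every iterate satisfies ‖z⁽ᵏ⁾ − z*‖₂ ≤ ‖z⁽⁰⁾ − z*‖₂ + 1. -/

import Mathlib

open scoped RealInnerProductSpace
open Matrix

/-- `A x` for `A` an `l × n` real matrix and `x ∈ ℝⁿ`, as Euclidean spaces. -/
noncomputable def mulVecE {l n : ℕ} (A : Matrix (Fin l) (Fin n) ℝ)
    (x : EuclideanSpace ℝ (Fin n)) : EuclideanSpace ℝ (Fin l) :=
  Matrix.toEuclideanLin A x

/-- `F(x) = (max{f₁(x),0}, …, max{f_m(x),0})`. -/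
noncomputable def Fplus {n m : ℕ} (f : Fin m → EuclideanSpace ℝ (Fin n) → ℝ)
    (x : EuclideanSpace ℝ (Fin n)) : EuclideanSpace ℝ (Fin m) :=
  (WithLp.equiv 2 (Fin m → ℝ)).symm fun i => max (f i x) 0

/-- The Lagrangian `L(x, λ, ν) = f₀(x) + λᵀF(x) + νᵀ(Ax - b)`. -/
noncomputable def Lag {n m l : ℕ} (f0 : EuclideanSpace ℝ (Fin n) → ℝ)
    (f : Fin m → EuclideanSpace ℝ (Fin n) → ℝ)
    (A : Matrix (Fin l) (Fin n) ℝ) (b : EuclideanSpace ℝ (Fin l))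
    (x : EuclideanSpace ℝ (Fin n)) (lam : EuclideanSpace ℝ (Fin m))
    (nu : EuclideanSpace ℝ (Fin l)) : ℝ :=
  f0 x + ⟪lam, Fplus f x⟫ + ⟪nu, mulVecE A x - b⟫


set_option maxHeartbeats 1000000 in
lemma dsg_abstract {E : Type*} [NormedAddCommGroup E] [InnerProductSpace ℝ E]
    (z s u : ℕ → E) (zstar : E) (β : ℕ → ℝ)
    (hβ0 : β 0 = 1) (hβ : ∀ k, β (k + 1) = β k + 1 / β k)
    (hs0 : s 0 = 0) (hs : ∀ k, s (k + 1) = s k + u k)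
    (hz : ∀ k, z (k + 1) = z 0 - (β k)⁻¹ • s (k + 1))
    (hu : ∀ k, ‖u k‖ = 1)
    (hmono : ∀ k, 0 ≤ ⟪u k, z k - zstar⟫) :
    ∀ k, ‖z k - zstar‖ ≤ ‖z 0 - zstar‖ + 1 := by
  have hβ1 : ∀ k, 1 ≤ β k := by
    intro k; induction k with
    | zero => simp [hβ0]
    | succ k ih =>
      have h1 : 0 < β k := lt_of_lt_of_le one_pos ih
      have h2 : 0 < 1 / β k := by positivity
      rw [hβ]; linarith
  have hβpos : ∀ k, 0 < β k := fun k => lt_of_lt_of_le one_pos (hβ1 k)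
  set r := ‖z 0 - zstar‖ with hr
  have hr0 : 0 ≤ r := norm_nonneg _
  set d0 := z 0 - zstar with hd0
  set a : ℕ → E := fun k => β k • d0 - s (k + 1) with ha
  have hzk : ∀ k, z (k + 1) - zstar = (β k)⁻¹ • a k := by
    intro k
    show _ = (β k)⁻¹ • (β k • d0 - s (k + 1))
    rw [hz k, smul_sub, smul_smul, inv_mul_cancel₀ (hβpos k).ne', one_smul, hd0]
    abel
  have main : ∀ k, ‖a k‖ ≤ β k * (r + 1) := by
    intro k; induction k with
    | zero =>
      have : a 0 = d0 - u 0 := by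
        show β 0 • d0 - s 1 = _
        rw [hβ0, hs 0, hs0, one_smul, zero_add]
      rw [this, hβ0, one_mul]
      calc ‖d0 - u 0‖ ≤ ‖d0‖ + ‖u 0‖ := norm_sub_le _ _
        _ = r + 1 := by rw [hu 0, hr]
    | succ k ih =>
      set B := β k with hB
      set c := B⁻¹ with hc
      have hc0 : 0 < c := inv_pos.mpr (hβpos k)
      have hc1 : c ≤ 1 := by
        rw [hc]; exact inv_le_one_of_one_le₀ (hβ1 k)
      have hBc : B * c = 1 := mul_inv_cancel₀ (hβpos k).ne'
      have hm : 0 ≤ ⟪u (k + 1), a k⟫ := by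
        have h := hmono (k + 1)
        rw [hzk k, real_inner_smul_right] at h
        nlinarith [hc0]
      have hak1 : a (k + 1) = a k + (c • d0 - u (k + 1)) := by
        show β (k + 1) • d0 - s (k + 2) = β k • d0 - s (k + 1) + (c • d0 - u (k + 1))
        rw [hβ k, hs (k + 1), add_smul, one_div]
        abel
      set w : E := c • d0 - u (k + 1) with hw
      have hwn : ‖w‖ ≤ c * r + 1 := by
        calc ‖w‖ ≤ ‖c • d0‖ + ‖u (k + 1)‖ := norm_sub_le _ _
          _ = c * r + 1 := by rw [norm_smul, hu (k + 1), Real.norm_eq_abs, abs_of_pos hc0, hr]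
      have hcs : ⟪a k, d0⟫ ≤ ‖a k‖ * r := real_inner_le_norm _ _
      have expand : ‖a (k + 1)‖ ^ 2 = ‖a k‖ ^ 2 + 2 * ⟪a k, w⟫ + ‖w‖ ^ 2 := by
        rw [hak1]; exact norm_add_sq_real _ _
      have hip : ⟪a k, w⟫ ≤ c * (‖a k‖ * r) := by
        rw [hw, inner_sub_right, real_inner_smul_right]
        have h2 : ⟪a k, u (k + 1)⟫ = ⟪u (k + 1), a k⟫ := real_inner_comm _ _
        nlinarith [mul_le_mul_of_nonneg_left hcs hc0.le]
      have hw2 : ‖w‖ ^ 2 ≤ (c * r + 1) ^ 2 := by nlinarith [norm_nonneg w]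
      have ht2 : ‖a k‖ ^ 2 ≤ (B * (r + 1)) ^ 2 := by nlinarith [norm_nonneg (a k)]
      have htr : ‖a k‖ * r ≤ B * (r + 1) * r := mul_le_mul_of_nonneg_right ih hr0
      have hq2 : ‖a (k + 1)‖ ^ 2 ≤ ((B + c) * (r + 1)) ^ 2 := by
        have h3 : c * (‖a k‖ * r) ≤ (r + 1) * r := by
          have := mul_le_mul_of_nonneg_left htr hc0.le
          have he : c * (B * (r + 1) * r) = (B * c) * ((r + 1) * r) := by ring
          rw [he, hBc, one_mul] at this
          exact this
        have h4 : (0:ℝ) ≤ 1 - c + c ^ 2 := by nlinarith [sq_nonneg (2 * c - 1)]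
        have step1 : ‖a (k + 1)‖ ^ 2 ≤ (B * (r + 1)) ^ 2 + 2 * ((r + 1) * r) + (c * r + 1) ^ 2 := by
          linarith [expand, hip, hw2, ht2, h3]
        have e : ((B + c) * (r + 1)) ^ 2
            = (B * (r + 1)) ^ 2 + 2 * (B * c) * (r + 1) ^ 2 + (c * (r + 1)) ^ 2 := by ring
        rw [hBc] at e
        have step2 : 2 * ((r + 1) * r) + (c * r + 1) ^ 2
            ≤ 2 * 1 * (r + 1) ^ 2 + (c * (r + 1)) ^ 2 := by
          nlinarith [mul_nonneg hr0 h4]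
        linarith [step1, step2, e.ge, e.le]
      have hpos : 0 ≤ (B + c) * (r + 1) := mul_nonneg (by linarith [hβ1 k]) (by linarith)
      calc ‖a (k + 1)‖ = Real.sqrt (‖a (k + 1)‖ ^ 2) := (Real.sqrt_sq (norm_nonneg _)).symm
        _ ≤ Real.sqrt (((B + c) * (r + 1)) ^ 2) := Real.sqrt_le_sqrt hq2
        _ = (B + c) * (r + 1) := Real.sqrt_sq hpos
        _ = β (k + 1) * (r + 1) := by rw [hβ k, one_div]
  intro k
  cases k with
  | zero => rw [← hr]; linarith
  | succ k =>
    rw [hzk k, norm_smul, Real.norm_eq_abs, abs_of_pos (inv_pos.mpr (hβpos k))]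
    calc (β k)⁻¹ * ‖a k‖ ≤ (β k)⁻¹ * (β k * (r + 1)) :=
          mul_le_mul_of_nonneg_left (main k) (inv_pos.mpr (hβpos k)).le
      _ = r + 1 := inv_mul_cancel_left₀ (hβpos k).ne' _

/-- Bundling of a triple of Euclidean vectors into the L² product space. -/
noncomputable def mk3 {n m l : ℕ} (x : EuclideanSpace ℝ (Fin n))
    (y : EuclideanSpace ℝ (Fin m)) (w : EuclideanSpace ℝ (Fin l)) :
    WithLp 2 (EuclideanSpace ℝ (Fin n) ×
      WithLp 2 (EuclideanSpace ℝ (Fin m) × EuclideanSpace ℝ (Fin l))) :=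
  (WithLp.equiv 2 _).symm (x, (WithLp.equiv 2 _).symm (y, w))

lemma mk3_add {n m l : ℕ} (x x' : EuclideanSpace ℝ (Fin n))
    (y y' : EuclideanSpace ℝ (Fin m)) (w w' : EuclideanSpace ℝ (Fin l)) :
    mk3 x y w + mk3 x' y' w' = mk3 (x + x') (y + y') (w + w') := rfl

lemma mk3_sub {n m l : ℕ} (x x' : EuclideanSpace ℝ (Fin n))
    (y y' : EuclideanSpace ℝ (Fin m)) (w w' : EuclideanSpace ℝ (Fin l)) :
    mk3 x y w - mk3 x' y' w' = mk3 (x - x') (y - y') (w - w') := rfl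

lemma mk3_smul {n m l : ℕ} (r : ℝ) (x : EuclideanSpace ℝ (Fin n))
    (y : EuclideanSpace ℝ (Fin m)) (w : EuclideanSpace ℝ (Fin l)) :
    r • mk3 x y w = mk3 (r • x) (r • y) (r • w) := rfl

lemma mk3_zero {n m l : ℕ} : mk3 (0 : EuclideanSpace ℝ (Fin n))
    (0 : EuclideanSpace ℝ (Fin m)) (0 : EuclideanSpace ℝ (Fin l)) = 0 := rfl

lemma mk3_norm_sq {n m l : ℕ} (x : EuclideanSpace ℝ (Fin n))
    (y : EuclideanSpace ℝ (Fin m)) (w : EuclideanSpace ℝ (Fin l)) :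
    ‖mk3 x y w‖ ^ 2 = ‖x‖ ^ 2 + ‖y‖ ^ 2 + ‖w‖ ^ 2 := by
  simp only [mk3, WithLp.prod_norm_sq_eq_of_L2, WithLp.equiv_symm_apply, WithLp.toLp_fst, WithLp.ofLp_toLp,
    WithLp.toLp_snd]
  ring

lemma mk3_inner {n m l : ℕ} (x x' : EuclideanSpace ℝ (Fin n))
    (y y' : EuclideanSpace ℝ (Fin m)) (w w' : EuclideanSpace ℝ (Fin l)) :
    ⟪mk3 x y w, mk3 x' y' w'⟫ = ⟪x, x'⟫ + ⟪y, y'⟫ + ⟪w, w'⟫ := by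
  simp only [mk3, WithLp.prod_inner_apply, WithLp.equiv_symm_apply, WithLp.toLp_fst, WithLp.ofLp_toLp,
    WithLp.toLp_snd]
  ring
/-- DSG iterates stay in the ball: `‖z⁽ᵏ⁾ - z*‖₂ ≤ ‖z⁽⁰⁾ - z*‖₂ + 1`. -/
theorem dsg_iterates_bounded
    (n m l : ℕ)
    (f0 : EuclideanSpace ℝ (Fin n) → ℝ)
    (f : Fin m → EuclideanSpace ℝ (Fin n) → ℝ)
    (hf0 : ConvexOn ℝ Set.univ f0)
    (hf : ∀ i, ConvexOn ℝ Set.univ (f i))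
    (A : Matrix (Fin l) (Fin n) ℝ) (b : EuclideanSpace ℝ (Fin l))
    (pstar : ℝ)
    (xstar : EuclideanSpace ℝ (Fin n))
    (lamstar : EuclideanSpace ℝ (Fin m)) (nustar : EuclideanSpace ℝ (Fin l))
    -- x* is primal optimal with value p*
    (hxfeas : ∀ i, f i xstar ≤ 0) (hxeq : mulVecE A xstar = b)
    (hxval : f0 xstar = pstar)
    -- saddle-point assumption
    (hlamstar : ∀ i, 0 ≤ lamstar i)
    (hsaddle_eq : Lag f0 f A b xstar lamstar nustar = pstar)
    (hsaddle1 : ∀ (lam : EuclideanSpace ℝ (Fin m)) (nu : EuclideanSpace ℝ (Fin l)),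
      (∀ i, 0 ≤ lam i) → Lag f0 f A b xstar lam nu ≤ pstar)
    (hsaddle2 : ∀ x, pstar ≤ Lag f0 f A b x lamstar nustar)
    -- fixed subgradient selections g₀(x) ∈ ∂f₀(x), gᵢ(x) ∈ ∂Fᵢ(x)
    (g0 : EuclideanSpace ℝ (Fin n) → EuclideanSpace ℝ (Fin n))
    (hg0 : ∀ x y, ⟪g0 x, y - x⟫ ≤ f0 y - f0 x)
    (g : Fin m → EuclideanSpace ℝ (Fin n) → EuclideanSpace ℝ (Fin n))
    (hg : ∀ i x y, ⟪g i x, y - x⟫ ≤ max (f i y) 0 - max (f i x) 0)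
    -- the DSG iterates z⁽ᵏ⁾ = (x⁽ᵏ⁾, λ⁽ᵏ⁾, ν⁽ᵏ⁾)
    (xk : ℕ → EuclideanSpace ℝ (Fin n))
    (lamk : ℕ → EuclideanSpace ℝ (Fin m))
    (nuk : ℕ → EuclideanSpace ℝ (Fin l))
    (hlam0 : ∀ i, 0 ≤ lamk 0 i)
    -- G(z⁽ᵏ⁾): primal component Gx k and total Euclidean norm nG k
    (Gx : ℕ → EuclideanSpace ℝ (Fin n))
    (hGx : ∀ k, Gx k
      = g0 (xk k) + (∑ i, lamk k i • g i (xk k)) + mulVecE Aᵀ (nuk k))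
    (nG : ℕ → ℝ)
    (hnG : ∀ k, nG k = Real.sqrt (‖Gx k‖ ^ 2 + ‖Fplus f (xk k)‖ ^ 2
      + ‖mulVecE A (xk k) - b‖ ^ 2))
    -- G(z⁽ᵏ⁾) ≠ 0
    (hGne : ∀ k, ¬ (Gx k = 0 ∧ Fplus f (xk k) = 0 ∧ mulVecE A (xk k) - b = 0))
    -- the averaging sequences s⁽ᵏ⁾ and weights β
    (sx : ℕ → EuclideanSpace ℝ (Fin n))
    (slam : ℕ → EuclideanSpace ℝ (Fin m))
    (snu : ℕ → EuclideanSpace ℝ (Fin l))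
    (hs0 : sx 0 = 0 ∧ slam 0 = 0 ∧ snu 0 = 0)
    (hsx : ∀ k, sx (k + 1) = sx k + (nG k)⁻¹ • Gx k)
    (hslam : ∀ k, slam (k + 1) = slam k + (nG k)⁻¹ • (-(Fplus f (xk k))))
    (hsnu : ∀ k, snu (k + 1) = snu k + (nG k)⁻¹ • (-(mulVecE A (xk k) - b)))
    (β : ℕ → ℝ) (hβ0 : β 0 = 1) (hβ : ∀ k, β (k + 1) = β k + 1 / β k)
    (hxk : ∀ k, xk (k + 1) = xk 0 - (β k)⁻¹ • sx (k + 1))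
    (hlamk : ∀ k, lamk (k + 1) = lamk 0 - (β k)⁻¹ • slam (k + 1))
    (hnuk : ∀ k, nuk (k + 1) = nuk 0 - (β k)⁻¹ • snu (k + 1))
    :
    ∀ k : ℕ,
      Real.sqrt (‖xk k - xstar‖ ^ 2 + ‖lamk k - lamstar‖ ^ 2 + ‖nuk k - nustar‖ ^ 2)
        ≤ Real.sqrt (‖xk 0 - xstar‖ ^ 2 + ‖lamk 0 - lamstar‖ ^ 2
            + ‖nuk 0 - nustar‖ ^ 2) + 1 := by
  classical
  have hβ1 : ∀ k, 1 ≤ β k := by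
    intro k; induction k with
    | zero => simp [hβ0]
    | succ k ih =>
      have h1 : 0 < β k := lt_of_lt_of_le one_pos ih
      have h2 : 0 < 1 / β k := by positivity
      rw [hβ]; linarith
  have hβpos : ∀ k, 0 < β k := fun k => lt_of_lt_of_le one_pos (hβ1 k)
  -- `nG k` is positive
  have hnGpos : ∀ k, 0 < nG k := by
    intro k
    rw [hnG k]
    apply Real.sqrt_pos.mpr
    by_contra h
    push_neg at h
    have h1 : (0:ℝ) ≤ ‖Gx k‖ ^ 2 := sq_nonneg _
    have h2 : (0:ℝ) ≤ ‖Fplus f (xk k)‖ ^ 2 := sq_nonneg _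
    have h3 : (0:ℝ) ≤ ‖mulVecE A (xk k) - b‖ ^ 2 := sq_nonneg _
    refine hGne k ⟨?_, ?_, ?_⟩
    · exact norm_eq_zero.mp ((pow_eq_zero_iff two_ne_zero).mp (by linarith))
    · exact norm_eq_zero.mp ((pow_eq_zero_iff two_ne_zero).mp (by linarith))
    · exact norm_eq_zero.mp ((pow_eq_zero_iff two_ne_zero).mp (by linarith))
  have hnGinv : ∀ k, (0:ℝ) ≤ (nG k)⁻¹ := fun k => (inv_pos.mpr (hnGpos k)).le
  -- componentwise description of Fplus
  have hFapp : ∀ x i, Fplus f x i = max (f i x) 0 := fun x i => rfl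
  -- λᵏ stays nonnegative
  have hslamnp : ∀ k i, slam k i ≤ 0 := by
    intro k
    induction k with
    | zero => intro i; rw [hs0.2.1]; simp
    | succ k ih =>
      intro i
      rw [hslam k]
      have h1 : (0:ℝ) ≤ max (f i (xk k)) 0 := le_max_right _ _
      have he : (slam k + (nG k)⁻¹ • -Fplus f (xk k)) i
          = slam k i + (nG k)⁻¹ * (-(max (f i (xk k)) 0)) := by
        simp [PiLp.add_apply, PiLp.smul_apply, PiLp.neg_apply, hFapp]
      rw [he]
      nlinarith [ih i, hnGinv k]
  have hlamnn : ∀ k i, 0 ≤ lamk k i := by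
    intro k i
    cases k with
    | zero => exact hlam0 i
    | succ k =>
      rw [hlamk k]
      have he : (lamk 0 - (β k)⁻¹ • slam (k+1)) i
          = lamk 0 i - (β k)⁻¹ * slam (k+1) i := by
        simp [PiLp.sub_apply, PiLp.smul_apply]
      rw [he]
      nlinarith [hslamnp (k+1) i, (inv_pos.mpr (hβpos k)).le, hlam0 i]
  -- adjoint property of the matrix
  have adj : ∀ (v : EuclideanSpace ℝ (Fin l)) (x : EuclideanSpace ℝ (Fin n)),
      ⟪mulVecE Aᵀ v, x⟫ = ⟪v, mulVecE A x⟫ := by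
    intro v x
    have h := Matrix.toEuclideanLin_conjTranspose_eq_adjoint A
    rw [Matrix.conjTranspose_eq_transpose_of_trivial] at h
    show ⟪Matrix.toEuclideanLin Aᵀ v, x⟫ = ⟪v, Matrix.toEuclideanLin A x⟫
    rw [h]
    exact LinearMap.adjoint_inner_left _ _ _
  -- the key monotonicity inequality
  have hkey : ∀ k, 0 ≤ ⟪Gx k, xk k - xstar⟫ + ⟪-(Fplus f (xk k)), lamk k - lamstar⟫
      + ⟪-(mulVecE A (xk k) - b), nuk k - nustar⟫ := by
    intro k
    have h0 : f0 (xk k) - f0 xstar ≤ ⟪g0 (xk k), xk k - xstar⟫ := by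
      have h := hg0 (xk k) xstar
      have e : ⟪g0 (xk k), xstar - xk k⟫ = -⟪g0 (xk k), xk k - xstar⟫ := by
        rw [← inner_neg_right, neg_sub]
      rw [e] at h; linarith
    have hgi : ∀ i, max (f i (xk k)) 0 ≤ ⟪g i (xk k), xk k - xstar⟫ := by
      intro i
      have h := hg i (xk k) xstar
      rw [max_eq_right (hxfeas i)] at h
      have e : ⟪g i (xk k), xstar - xk k⟫ = -⟪g i (xk k), xk k - xstar⟫ := by
        rw [← inner_neg_right, neg_sub]
      rw [e] at h; linarith
    have hsubA : mulVecE A (xk k - xstar) = mulVecE A (xk k) - b := by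
      rw [← hxeq]
      exact map_sub (Matrix.toEuclideanLin A) (xk k) xstar
    have hGxe : ⟪Gx k, xk k - xstar⟫ = ⟪g0 (xk k), xk k - xstar⟫
        + ∑ i, lamk k i * ⟪g i (xk k), xk k - xstar⟫ + ⟪nuk k, mulVecE A (xk k) - b⟫ := by
      rw [hGx k, inner_add_left, inner_add_left, sum_inner, adj, hsubA]
      congr 2
      exact Finset.sum_congr rfl fun i _ => real_inner_smul_left _ _ _
    have hlF : ∀ (lam : EuclideanSpace ℝ (Fin m)),
        ⟪lam, Fplus f (xk k)⟫ = ∑ i, lam i * max (f i (xk k)) 0 := by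
      intro lam
      rw [PiLp.inner_apply]
      simp [RCLike.inner_apply, hFapp]
      exact Finset.sum_congr rfl fun i _ => mul_comm _ _
    have hsum : ∑ i, lamk k i * max (f i (xk k)) 0
        ≤ ∑ i, lamk k i * ⟪g i (xk k), xk k - xstar⟫ :=
      Finset.sum_le_sum fun i _ => mul_le_mul_of_nonneg_left (hgi i) (hlamnn k i)
    have hsad := hsaddle2 (xk k)
    have hLag : Lag f0 f A b (xk k) lamstar nustar
        = f0 (xk k) + ⟪lamstar, Fplus f (xk k)⟫ + ⟪nustar, mulVecE A (xk k) - b⟫ := rfl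
    rw [hLag] at hsad
    have e2 : ⟪-(Fplus f (xk k)), lamk k - lamstar⟫
        = ⟪lamstar, Fplus f (xk k)⟫ - ⟪lamk k, Fplus f (xk k)⟫ := by
      rw [inner_neg_left, inner_sub_right,
        real_inner_comm (Fplus f (xk k)) (lamk k),
        real_inner_comm (Fplus f (xk k)) lamstar]
      ring
    have e3 : ⟪-(mulVecE A (xk k) - b), nuk k - nustar⟫
        = ⟪nustar, mulVecE A (xk k) - b⟫ - ⟪nuk k, mulVecE A (xk k) - b⟫ := by
      rw [inner_neg_left, inner_sub_right,
        real_inner_comm (mulVecE A (xk k) - b) (nuk k),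
        real_inner_comm (mulVecE A (xk k) - b) nustar]
      ring
    rw [e2, e3, hGxe, hlF (lamk k)]
    linarith [hsum, h0, hsad, hxval]
  -- assemble everything in the product space
  have bound := dsg_abstract
    (fun k => mk3 (xk k) (lamk k) (nuk k))
    (fun k => mk3 (sx k) (slam k) (snu k))
    (fun k => (nG k)⁻¹ • mk3 (Gx k) (-(Fplus f (xk k))) (-(mulVecE A (xk k) - b)))
    (mk3 xstar lamstar nustar) β hβ0 hβ
    (by
      show mk3 (sx 0) (slam 0) (snu 0) = 0
      rw [hs0.1, hs0.2.1, hs0.2.2, mk3_zero])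
    (by
      intro k
      show mk3 (sx (k+1)) (slam (k+1)) (snu (k+1)) = mk3 (sx k) (slam k) (snu k)
        + (nG k)⁻¹ • mk3 (Gx k) (-(Fplus f (xk k))) (-(mulVecE A (xk k) - b))
      rw [hsx k, hslam k, hsnu k, mk3_smul, mk3_add])
    (by
      intro k
      show mk3 (xk (k+1)) (lamk (k+1)) (nuk (k+1)) = mk3 (xk 0) (lamk 0) (nuk 0)
        - (β k)⁻¹ • mk3 (sx (k+1)) (slam (k+1)) (snu (k+1))
      rw [hxk k, hlamk k, hnuk k, mk3_smul, mk3_sub])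
    (by
      intro k
      show ‖(nG k)⁻¹ • mk3 (Gx k) (-(Fplus f (xk k))) (-(mulVecE A (xk k) - b))‖ = 1
      have hGn : ‖mk3 (Gx k) (-(Fplus f (xk k))) (-(mulVecE A (xk k) - b))‖ = nG k := by
        have h2 := mk3_norm_sq (Gx k) (-(Fplus f (xk k))) (-(mulVecE A (xk k) - b))
        rw [norm_neg, norm_neg] at h2
        rw [← Real.sqrt_sq (norm_nonneg (mk3 (Gx k) (-(Fplus f (xk k)))
          (-(mulVecE A (xk k) - b)))), h2, ← hnG k]
      rw [norm_smul, hGn, Real.norm_eq_abs, abs_of_pos (inv_pos.mpr (hnGpos k))]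
      exact inv_mul_cancel₀ (hnGpos k).ne'
    )
    (by
      intro k
      show 0 ≤ ⟪(nG k)⁻¹ • mk3 (Gx k) (-(Fplus f (xk k))) (-(mulVecE A (xk k) - b)),
        mk3 (xk k) (lamk k) (nuk k) - mk3 xstar lamstar nustar⟫
      rw [real_inner_smul_left, mk3_sub, mk3_inner]
      exact mul_nonneg (hnGinv k) (hkey k))
  intro k
  have nrm : ∀ (x : EuclideanSpace ℝ (Fin n)) (y : EuclideanSpace ℝ (Fin m))
      (w : EuclideanSpace ℝ (Fin l)),
      Real.sqrt (‖x‖ ^ 2 + ‖y‖ ^ 2 + ‖w‖ ^ 2) = ‖mk3 x y w‖ := by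
    intro x y w
    rw [← mk3_norm_sq, Real.sqrt_sq (norm_nonneg _)]
  rw [nrm, nrm]
  have e1 : mk3 (xk k - xstar) (lamk k - lamstar) (nuk k - nustar)
      = mk3 (xk k) (lamk k) (nuk k) - mk3 xstar lamstar nustar := (mk3_sub _ _ _ _ _ _).symm
  have e0 : mk3 (xk 0 - xstar) (lamk 0 - lamstar) (nuk 0 - nustar)
      = mk3 (xk 0) (lamk 0) (nuk 0) - mk3 xstar lamstar nustar := (mk3_sub _ _ _ _ _ _).symm
  rw [e1, e0]
  exact bound k
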